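/- Let Ω be a finite set with k := |Ω| > 1, let M ⊆ Δ^k be nonempty, and let m = (m_1, m_2, …) be a sequence with each m_i ∈ M. Then there exists a sequence m̃ = (m̃_1, m̃_2, …) with each m̃_i ∈ M such that every element of M is a cluster point of (m̃_i) with respect to the Euclidean metric and CP(n ↦ (1/n)∑_{i=1}^n m_i) = CP(n ↦ (1/n)∑_{i=1}^n m̃_i). -/

import Mathlib

open MeasureTheory Filter Topology

noncomputable section

/-- The set of probability vectors over a finite set `Ω`, i.e. the standard simplex
inside the Euclidean space `ℝ^Ω`. -/
def probVec (Ω : Type*) [Fintype Ω] : Set (EuclideanSpace ℝ Ω) :=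
  {p | (∀ x, 0 ≤ p x) ∧ ∑ x, p x = 1}

/-- The relative-frequency vector of the first `n` terms of `ω`. -/
def relFreq {Ω : Type*} [Fintype Ω] [DecidableEq Ω] (ω : ℕ → Ω) (n : ℕ) :
    EuclideanSpace ℝ Ω :=
  WithLp.toLp 2 (fun x => (((Finset.range n).filter fun i => ω i = x).card : ℝ) / n)

/-- The set of cluster points of a sequence in a topological space. -/
def clusterPts {X : Type*} [TopologicalSpace X] (a : ℕ → X) : Set X :=
  {c | MapClusterPt c atTop a}

/-- Cesàro averages of a sequence of vectors. -/
def cesaro {Ω : Type*} [Fintype Ω] (m : ℕ → EuclideanSpace ℝ Ω) (n : ℕ) :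
    EuclideanSpace ℝ Ω :=
  (n : ℝ)⁻¹ • ∑ i ∈ Finset.range n, m i

/-- `μ` is the infinite (Ionescu-Tulcea) independent product of the probability vectors `m i`,
characterized by its values on cylinder sets. -/
def IsIT {Ω : Type*} [Fintype Ω] [MeasurableSpace Ω] (m : ℕ → EuclideanSpace ℝ Ω)
    (μ : Measure (ℕ → Ω)) : Prop :=
  ∀ (n : ℕ) (x : Fin n → Ω),
    μ {ω | ∀ i : Fin n, ω (i : ℕ) = x i} = ∏ i : Fin n, ENNReal.ofReal (m i.val (x i))

end

/-- Every probability vector has Euclidean norm at most `1`. -/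
lemma aux_norm_le_one {Ω : Type*} [Fintype Ω] {p : EuclideanSpace ℝ Ω}
    (hp : p ∈ probVec Ω) : ‖p‖ ≤ 1 := by
  rw [EuclideanSpace.norm_eq]
  refine Real.sqrt_le_one.2 ?_
  calc ∑ x, ‖p x‖^2 ≤ ∑ x, p x := by
        apply Finset.sum_le_sum
        intro x _
        have h1 : p x ≤ 1 := by
          rw [← hp.2]
          exact Finset.single_le_sum (fun i _ => hp.1 i) (Finset.mem_univ x)
        rw [Real.norm_eq_abs, sq_abs]
        nlinarith [hp.1 x]
    _ = 1 := hp.2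

/-- If two sequences are asymptotically close, cluster points transfer. -/
lemma aux_cluster_transfer {X : Type*} [PseudoMetricSpace X] {a b : ℕ → X}
    (h : Filter.Tendsto (fun n => dist (a n) (b n)) atTop (𝓝 0)) {c : X}
    (hc : MapClusterPt c atTop a) : MapClusterPt c atTop b := by
  rw [mapClusterPt_iff_frequently] at hc ⊢
  intro s hs
  obtain ⟨ε, εpos, hball⟩ := Metric.mem_nhds_iff.mp hs
  have h1 := hc (Metric.ball c (ε/2)) (Metric.ball_mem_nhds _ (by positivity))
  have h2 : ∀ᶠ n in atTop, dist (a n) (b n) < ε/2 :=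
    h.eventually (Iio_mem_nhds (by positivity))
  refine (h1.and_eventually h2).mono ?_
  rintro n ⟨hn1, hn2⟩
  apply hball
  rw [Metric.mem_ball] at hn1 ⊢
  calc dist (b n) c ≤ dist (b n) (a n) + dist (a n) c := dist_triangle _ _ _
    _ < ε/2 + ε/2 := by rw [dist_comm (b n)]; exact add_lt_add hn2 hn1
    _ = ε := by ring

/-- Distance between Cesàro averages of sequences differing only on perfect squares. -/
lemma aux_cesaro_dist {Ω : Type*} [Fintype Ω] (m mt : ℕ → EuclideanSpace ℝ Ω)
    (hb : ∀ i, ‖m i - mt i‖ ≤ if i = (Nat.sqrt i)^2 then 2 else 0) (n : ℕ) :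
    dist (cesaro m n) (cesaro mt n) ≤ 2 * ((Nat.sqrt n : ℝ) + 1) / n := by
  have hcard : ((Finset.range n).filter fun i => i = (Nat.sqrt i)^2).card
      ≤ Nat.sqrt n + 1 := by
    have := Finset.card_le_card_of_injOn (f := Nat.sqrt)
      (s := (Finset.range n).filter fun i => i = (Nat.sqrt i)^2)
      (t := Finset.range (Nat.sqrt n + 1))
      (fun i hi => by
        simp only [Finset.coe_filter, Finset.mem_coe, Finset.mem_filter, Finset.mem_range, Set.mem_setOf_eq, Finset.coe_range, Set.mem_Iio] at hi ⊢
        exact Nat.lt_succ_of_le (Nat.sqrt_le_sqrt hi.1.le))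
      (fun i hi j hj hij => by
        simp only [Finset.coe_filter, Set.mem_setOf_eq] at hi hj
        rw [hi.2, hj.2, hij])
    simpa using this
  have hsum : ‖∑ i ∈ Finset.range n, (m i - mt i)‖
      ≤ 2 * ((Nat.sqrt n : ℝ) + 1) := by
    calc ‖∑ i ∈ Finset.range n, (m i - mt i)‖
        ≤ ∑ i ∈ Finset.range n, ‖m i - mt i‖ := norm_sum_le _ _
      _ ≤ ∑ i ∈ Finset.range n, (if i = (Nat.sqrt i)^2 then (2:ℝ) else 0) :=
          Finset.sum_le_sum fun i _ => hb i
      _ = 2 * (((Finset.range n).filter fun i => i = (Nat.sqrt i)^2).card : ℝ) := by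
          rw [Finset.sum_ite, Finset.sum_const, Finset.sum_const]
          simp [mul_comm]
      _ ≤ 2 * ((Nat.sqrt n : ℝ) + 1) := by
          have : (((Finset.range n).filter fun i => i = (Nat.sqrt i)^2).card : ℝ)
              ≤ (Nat.sqrt n : ℝ) + 1 := by exact_mod_cast hcard
          linarith
  have heq : cesaro m n - cesaro mt n = (n : ℝ)⁻¹ • ∑ i ∈ Finset.range n, (m i - mt i) := by
    rw [cesaro, cesaro, ← smul_sub, Finset.sum_sub_distrib]
  rw [dist_eq_norm, heq, norm_smul]
  rcases Nat.eq_zero_or_pos n with rfl | hn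
  · simp
  · rw [Real.norm_eq_abs, abs_of_nonneg (by positivity)]
    rw [div_eq_mul_inv]
    have hnn : (0:ℝ) ≤ ((n:ℝ))⁻¹ := by positivity
    rw [mul_comm]
    exact mul_le_mul_of_nonneg_right hsum hnn

lemma aux_tendsto : Filter.Tendsto (fun n : ℕ => 2 * ((Nat.sqrt n : ℝ) + 1) / n)
    atTop (𝓝 0) := by
  have hs : Filter.Tendsto (fun n : ℕ => (Nat.sqrt n : ℝ)) atTop atTop := by
    apply tendsto_natCast_atTop_atTop.comp
    apply tendsto_atTop_atTop.2
    intro b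
    exact ⟨b^2, fun n hn => by simpa [Nat.sqrt_eq'] using Nat.sqrt_le_sqrt hn⟩
  have hg : Filter.Tendsto (fun n : ℕ => 4 / (Nat.sqrt n : ℝ)) atTop (𝓝 0) := by
    simpa [div_eq_mul_inv] using hs.inv_tendsto_atTop.const_mul (4:ℝ)
  apply squeeze_zero' ?_ ?_ hg
  · filter_upwards [eventually_ge_atTop 1] with n hn
    positivity
  · filter_upwards [eventually_ge_atTop 1] with n hn
    have h1 : 1 ≤ Nat.sqrt n := Nat.sqrt_pos.2 hn
    have h1' : (1:ℝ) ≤ (Nat.sqrt n : ℝ) := by exact_mod_cast h1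
    have h2 : (Nat.sqrt n : ℝ) * (Nat.sqrt n : ℝ) ≤ (n : ℝ) := by
      exact_mod_cast Nat.sqrt_le n
    calc 2 * ((Nat.sqrt n : ℝ) + 1) / n
        ≤ 4 * (Nat.sqrt n : ℝ) / ((Nat.sqrt n : ℝ) * (Nat.sqrt n : ℝ)) := by
          apply div_le_div₀ (by positivity) (by linarith) (by positivity) h2
      _ = 4 / (Nat.sqrt n : ℝ) := by
          have hne : (Nat.sqrt n : ℝ) ≠ 0 := by linarith
          field_simp

/-- Any sequence in `M` can be modified to a sequence in `M` having every
element of `M` as a cluster point, without changing the set of cluster points of the Cesàro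
averages. -/
theorem stmt4 {Ω : Type*} [Fintype Ω] (hcard : 1 < Fintype.card Ω)
    (M : Set (EuclideanSpace ℝ Ω)) (hM : M.Nonempty) (hMsub : M ⊆ probVec Ω)
    (m : ℕ → EuclideanSpace ℝ Ω) (hm : ∀ i, m i ∈ M) :
    ∃ mt : ℕ → EuclideanSpace ℝ Ω, (∀ i, mt i ∈ M) ∧
      (∀ p ∈ M, MapClusterPt p atTop mt) ∧
      clusterPts (cesaro m) = clusterPts (cesaro mt) := by
  classical
  obtain ⟨p0, hp0⟩ := hM
  haveI : Nonempty M := ⟨⟨p0, hp0⟩⟩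
  obtain ⟨f, hf⟩ : ∃ f : ℕ → M, DenseRange f :=
    ⟨TopologicalSpace.denseSeq M, TopologicalSpace.denseRange_denseSeq M⟩
  set mt : ℕ → EuclideanSpace ℝ Ω := fun i =>
    if i = (Nat.sqrt i)^2 then (f (Nat.unpair (Nat.sqrt i)).1 : EuclideanSpace ℝ Ω)
    else m i with hmt
  have hmtval : ∀ k : ℕ, mt (k^2) = (f (Nat.unpair k).1 : EuclideanSpace ℝ Ω) := by
    intro k
    simp [hmt, Nat.sqrt_eq']
  have hmtM : ∀ i, mt i ∈ M := by
    intro i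
    rw [hmt]
    dsimp only
    split
    · exact (f _).2
    · exact hm i
  refine ⟨mt, hmtM, ?_, ?_⟩
  · -- every point of M is a cluster point of mt
    intro p hp
    rw [mapClusterPt_iff_frequently]
    intro s hs
    obtain ⟨ε, εpos, hball⟩ := Metric.mem_nhds_iff.mp hs
    obtain ⟨j, hj⟩ := Metric.denseRange_iff.mp hf ⟨p, hp⟩ ε εpos
    rw [frequently_atTop]
    intro N
    refine ⟨(Nat.pair j N)^2, ?_, ?_⟩
    · calc N ≤ Nat.pair j N := Nat.right_le_pair j N
        _ ≤ (Nat.pair j N)^2 := Nat.le_self_pow two_ne_zero _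
    · have hval : mt ((Nat.pair j N)^2) = (f j : EuclideanSpace ℝ Ω) := by
        rw [hmtval, Nat.unpair_pair]
      rw [hval]
      apply hball
      rw [Metric.mem_ball]
      have := hj
      rw [Subtype.dist_eq] at this
      simpa [dist_comm] using this
  · -- Cesàro cluster points agree
    have hb : ∀ i, ‖m i - mt i‖ ≤ if i = (Nat.sqrt i)^2 then 2 else 0 := by
      intro i
      rw [hmt]
      dsimp only
      split
      · calc ‖m i - _‖ ≤ ‖m i‖ + ‖(f (Nat.unpair (Nat.sqrt i)).1 : EuclideanSpace ℝ Ω)‖ :=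
              norm_sub_le _ _
          _ ≤ 1 + 1 := add_le_add (aux_norm_le_one (hMsub (hm i)))
              (aux_norm_le_one (hMsub (f _).2))
          _ = 2 := by norm_num
      · simp
    have hdist : Filter.Tendsto (fun n => dist (cesaro m n) (cesaro mt n)) atTop (𝓝 0) := by
      apply squeeze_zero (fun n => dist_nonneg) (aux_cesaro_dist m mt hb) aux_tendsto
    have hdist' : Filter.Tendsto (fun n => dist (cesaro mt n) (cesaro m n)) atTop (𝓝 0) := by
      simpa [dist_comm] using hdist
    ext c
    simp only [clusterPts, Set.mem_setOf_eq]
    exact ⟨fun h => aux_cluster_transfer hdist h, fun h => aux_cluster_transfer hdist' h⟩
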